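/- Let Φ be symmetric positive definite with λ_min(Φ) = a > 0 and Σ the unique solution of ΦΣ + ΣΦ = Σ_ε with Σ_ε positive semidefinite, α ∈ (0, 1/‖Φ‖). Then the difference Σ^α − Σ (with Σ^α = α Σ_{k≥0}(I−αΦ)^kΣ_ε(I−αΦ)^k) admits the representation Σ^α − Σ = α² Σ_{k=0}^∞ (I − αΦ)^k ΦΣΦ (I − αΦ)^k. -/

import Mathlib

set_option synthInstance.maxHeartbeats 1000000
set_option maxHeartbeats 1000000


open Matrix

noncomputable def vnorm {d : ℕ} (v : Fin d → ℝ) : ℝ := Real.sqrt (∑ i, v i ^ 2)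

noncomputable def opNorm {d : ℕ} (A : Matrix (Fin d) (Fin d) ℝ) : ℝ :=
  ‖Matrix.toEuclideanCLM (𝕜 := ℝ) A‖

section aux

/-- Abstract algebraic identity used in the telescoping argument. -/
lemma ring_id1 {R : Type*} [Ring R] [Module ℝ R] [SMulCommClass ℝ R R]
    [IsScalarTower ℝ R R] (α : ℝ) (T S : R) :
    S - (1 - α • T) * S * (1 - α • T)
      = α • (T * S + S * T) - (α ^ 2) • (T * S * T) := by
  simp only [sub_mul, mul_sub, one_mul, mul_one, smul_mul_assoc, mul_smul_comm,
    smul_sub, smul_add, smul_smul]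
  module

lemma ring_id2 {R : Type*} [Ring R] (B S X : R) (k : ℕ)
    (h : S - B * S * B = X) :
    B ^ k * S * B ^ k - B ^ (k + 1) * S * B ^ (k + 1) = B ^ k * X * B ^ k := by
  have hc : B ^ k * B = B * B ^ k := ((Commute.refl B).pow_left k).eq
  have h1 : B ^ (k + 1) * S * B ^ (k + 1) = B ^ k * (B * S * B) * B ^ k := by
    rw [pow_succ]
    nth_rewrite 2 [hc]
    simp only [mul_assoc]
  rw [h1, ← h]
  simp only [mul_sub, sub_mul]

open scoped RealInnerProductSpace

variable {d : ℕ}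

local notation "E" => EuclideanSpace ℝ (Fin d)

/-- Cauchy–Schwarz-type estimate for a positive self-adjoint operator. -/
lemma posCS (T : E →L[ℝ] E) (hsa : ContinuousLinearMap.adjoint T = T)
    (hpos : ∀ y : E, 0 ≤ ⟪T y, y⟫) (x : E) :
    ‖T x‖ ^ 2 ≤ ‖T‖ * ⟪T x, x⟫ := by
  have key : ∀ u v : E, ⟪T u, v⟫ ^ 2 ≤ ⟪T u, u⟫ * ⟪T v, v⟫ := by
    intro u v
    have hsym : ⟪T v, u⟫ = ⟪T u, v⟫ := by
      conv_lhs => rw [← hsa]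
      rw [ContinuousLinearMap.adjoint_inner_left, real_inner_comm]
    have h : ∀ t : ℝ, 0 ≤ ⟪T v, v⟫ * (t * t) + (2 * ⟪T u, v⟫) * t + ⟪T u, u⟫ := by
      intro t
      have hexp : ⟪T (u + t • v), u + t • v⟫
          = ⟪T u, u⟫ + t * ⟪T u, v⟫ + (t * ⟪T v, u⟫ + t * (t * ⟪T v, v⟫)) := by
        rw [_root_.map_add, ContinuousLinearMap.map_smul, inner_add_left, inner_add_right,
          inner_add_right, real_inner_smul_right, real_inner_smul_left,
          real_inner_smul_left, real_inner_smul_right]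
      have h0 := hpos (u + t • v)
      rw [hexp, hsym] at h0
      nlinarith [h0]
    have hd := discrim_le_zero h
    rw [discrim] at hd
    nlinarith [hd]
  have hkey := key x (T x)
  have h1 : ⟪T x, T x⟫ = ‖T x‖ ^ 2 := real_inner_self_eq_norm_sq _
  have h2 : ⟪T (T x), T x⟫ ≤ ‖T‖ * ‖T x‖ ^ 2 := by
    calc ⟪T (T x), T x⟫ ≤ ‖T (T x)‖ * ‖T x‖ := real_inner_le_norm _ _
    _ ≤ (‖T‖ * ‖T x‖) * ‖T x‖ :=
        mul_le_mul_of_nonneg_right (T.le_opNorm _) (norm_nonneg _)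
    _ = ‖T‖ * ‖T x‖ ^ 2 := by ring
  rw [h1] at hkey
  have hq : 0 ≤ ⟪T x, x⟫ := hpos x
  have hN : 0 ≤ ‖T‖ := norm_nonneg _
  rcases eq_or_lt_of_le (norm_nonneg (T x)) with h0 | h0
  · have hz : T x = 0 := by rw [← norm_eq_zero]; exact h0.symm
    rw [hz, inner_zero_left]
    simp
  · have hy2 : 0 < ‖T x‖ ^ 2 := by positivity
    nlinarith [mul_le_mul_of_nonneg_left h2 hq]

end aux

set_option maxHeartbeats 1000000

/-- If `Σ` is the unique solution of `ΦΣ + ΣΦ = Σ_ε` and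
`Σ^α = α Σ_{k≥0} (I−αΦ)^k Σ_ε (I−αΦ)^k`, then
`Σ^α − Σ = α² Σ_{k≥0} (I−αΦ)^k ΦΣΦ (I−αΦ)^k`. -/
theorem stmt_19 {d : ℕ} (a α : ℝ) (ha : 0 < a)
    (Φ Se S : Matrix (Fin d) (Fin d) ℝ)
    (hΦpd : Φ.PosDef)
    (hmin : ∀ u : Fin d → ℝ, a * vnorm u ^ 2 ≤ u ⬝ᵥ Φ.mulVec u)
    (hSe : Se.PosSemidef)
    (hα : 0 < α) (hα' : α ≤ 1 / opNorm Φ)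
    (hLyap : Φ * S + S * Φ = Se) :
    (α • ∑' k : ℕ, ((1 : Matrix (Fin d) (Fin d) ℝ) - α • Φ) ^ k * Se
        * ((1 : Matrix (Fin d) (Fin d) ℝ) - α • Φ) ^ k) - S
      = α ^ 2 • ∑' k : ℕ, ((1 : Matrix (Fin d) (Fin d) ℝ) - α • Φ) ^ k * (Φ * S * Φ)
          * ((1 : Matrix (Fin d) (Fin d) ℝ) - α • Φ) ^ k := by
  classical
  open scoped RealInnerProductSpace in
  rcases Nat.eq_zero_or_pos d with rfl | hd
  · haveI : Subsingleton (Matrix (Fin 0) (Fin 0) ℝ) :=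
      ⟨fun A B => funext fun i => Fin.elim0 i⟩
    exact Subsingleton.elim _ _
  -- set up the CLM picture
  set e := Matrix.toEuclideanCLM (𝕜 := ℝ) (n := Fin d) with he
  set T := e Φ with hT
  set S' := e S with hS'
  set Se' := e Se with hSe'
  set B : EuclideanSpace ℝ (Fin d) →L[ℝ] EuclideanSpace ℝ (Fin d) := 1 - α • T with hB
  haveI instTower : IsScalarTower ℝ (EuclideanSpace ℝ (Fin d) →L[ℝ] EuclideanSpace ℝ (Fin d))
      (EuclideanSpace ℝ (Fin d) →L[ℝ] EuclideanSpace ℝ (Fin d)) :=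
    ⟨fun r x y => by ext v; rfl⟩
  haveI instComm : SMulCommClass ℝ (EuclideanSpace ℝ (Fin d) →L[ℝ] EuclideanSpace ℝ (Fin d))
      (EuclideanSpace ℝ (Fin d) →L[ℝ] EuclideanSpace ℝ (Fin d)) :=
    ⟨fun r x y => by
      ext v
      simp [ContinuousLinearMap.smul_apply, ContinuousLinearMap.mul_apply]⟩
  -- transfer hmin
  have hmin' : ∀ x : EuclideanSpace ℝ (Fin d), a * ‖x‖ ^ 2 ≤ ⟪T x, x⟫ := by
    intro x
    set u : Fin d → ℝ := WithLp.equiv 2 _ x with hu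
    have hx : x = (WithLp.equiv 2 _).symm u := by rw [hu]; simp
    have hTx : T x = (WithLp.equiv 2 _).symm (Matrix.toLin' Φ u) := by
      rw [hx, hT, he]
      rfl
    have hinner : ⟪T x, x⟫ = u ⬝ᵥ Φ.mulVec u := by
      rw [hTx, hx]
      rw [PiLp.inner_apply]
      simp only [RCLike.inner_apply, starRingEnd_apply, star_trivial,
        WithLp.equiv_symm_apply, PiLp.toLp_apply, Matrix.toLin'_apply]
      rfl
    have hnorm : ‖x‖ ^ 2 = vnorm u ^ 2 := by
      rw [EuclideanSpace.norm_eq, vnorm]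
      congr 2
      refine Finset.sum_congr rfl fun i _ => ?_
      rw [Real.norm_eq_abs, sq_abs]
      rfl
    rw [hinner, hnorm]
    exact hmin u
  have hpos : ∀ y : EuclideanSpace ℝ (Fin d), 0 ≤ ⟪T y, y⟫ := by
    intro y
    have := hmin' y
    nlinarith [sq_nonneg ‖y‖]
  -- self-adjointness
  have hsa : ContinuousLinearMap.adjoint T = T := by
    have hst : star T = T := by
      rw [hT, ← map_star]
      congr 1
      exact hΦpd.1
    rw [ContinuousLinearMap.star_eq_adjoint] at hst
    exact hst
  -- ‖T‖ bounds
  have hTnorm : opNorm Φ = ‖T‖ := rfl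
  have haT : a ≤ ‖T‖ := by
    set x₀ : EuclideanSpace ℝ (Fin d) := EuclideanSpace.single ⟨0, hd⟩ (1 : ℝ) with hx₀
    have hn : ‖x₀‖ = 1 := by rw [hx₀, EuclideanSpace.norm_single]; simp
    have h1 := hmin' x₀
    have h2 : ⟪T x₀, x₀⟫ ≤ ‖T‖ := by
      calc ⟪T x₀, x₀⟫ ≤ ‖T x₀‖ * ‖x₀‖ := real_inner_le_norm _ _
      _ ≤ ‖T‖ * ‖x₀‖ * ‖x₀‖ :=
          mul_le_mul_of_nonneg_right (T.le_opNorm x₀) (norm_nonneg _)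
      _ = ‖T‖ := by rw [hn]; ring
    rw [hn] at h1
    nlinarith
  have hTpos : 0 < ‖T‖ := lt_of_lt_of_le ha haT
  have hαT : α * ‖T‖ ≤ 1 := by
    rw [hTnorm, le_div_iff₀ hTpos] at hα'
    exact hα'
  have hαa1 : α * a ≤ 1 := le_trans (by nlinarith) hαT
  have hαa0 : 0 < α * a := mul_pos hα ha
  -- the contraction bound
  set r : ℝ := Real.sqrt (1 - α * a) with hr
  have hr0 : 0 ≤ r := Real.sqrt_nonneg _
  have hr2 : r ^ 2 = 1 - α * a := Real.sq_sqrt (by linarith)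
  have hr1 : r < 1 := by nlinarith [hr2]
  have hBnorm : ‖B‖ ≤ r := by
    refine ContinuousLinearMap.opNorm_le_bound _ hr0 fun x => ?_
    have hBx : B x = x - α • T x := by
      rw [hB]; simp [sub_smul]
    have hsq : ‖B x‖ ^ 2 ≤ (1 - α * a) * ‖x‖ ^ 2 := by
      rw [hBx, norm_sub_sq_real]
      have h1 : ⟪x, α • T x⟫ = α * ⟪T x, x⟫ := by
        rw [real_inner_smul_right, real_inner_comm]
      have h2 : ‖α • T x‖ ^ 2 = α ^ 2 * ‖T x‖ ^ 2 := by
        rw [norm_smul, Real.norm_eq_abs, abs_of_pos hα, mul_pow]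
      rw [h1, h2]
      have hCS := posCS T hsa hpos x
      have hq := hpos x
      have h3 : α ^ 2 * ‖T x‖ ^ 2 ≤ α * ⟪T x, x⟫ := by
        calc α ^ 2 * ‖T x‖ ^ 2 ≤ α ^ 2 * (‖T‖ * ⟪T x, x⟫) := by nlinarith
        _ = (α * ‖T‖) * (α * ⟪T x, x⟫) := by ring
        _ ≤ 1 * (α * ⟪T x, x⟫) := by
            apply mul_le_mul_of_nonneg_right hαT
            positivity
        _ = α * ⟪T x, x⟫ := by ring
      have h4 := hmin' x
      nlinarith
    calc ‖B x‖ = Real.sqrt (‖B x‖ ^ 2) := by rw [Real.sqrt_sq (norm_nonneg _)]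
    _ ≤ Real.sqrt ((1 - α * a) * ‖x‖ ^ 2) := Real.sqrt_le_sqrt hsq
    _ = r * ‖x‖ := by
        rw [Real.sqrt_mul (by linarith), Real.sqrt_sq (norm_nonneg _)]
  -- summability of the sandwich series
  have hsand : ∀ (X : EuclideanSpace ℝ (Fin d) →L[ℝ] EuclideanSpace ℝ (Fin d)) (k : ℕ),
      ‖B ^ k * X * B ^ k‖ ≤ ‖X‖ * (r ^ 2) ^ k := by
    have hBk : ∀ k, ‖B ^ k‖ ≤ r ^ k := by
      intro k
      induction k with
      | zero =>
        rw [pow_zero, pow_zero]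
        exact ContinuousLinearMap.norm_id_le
      | succ k ih =>
        rw [pow_succ, pow_succ]
        exact le_trans (norm_mul_le _ _)
          (mul_le_mul ih hBnorm (norm_nonneg _) (pow_nonneg hr0 _))
    intro X k
    calc ‖B ^ k * X * B ^ k‖ ≤ ‖B ^ k * X‖ * ‖B ^ k‖ := norm_mul_le _ _
    _ ≤ ‖B ^ k‖ * ‖X‖ * ‖B ^ k‖ :=
        mul_le_mul_of_nonneg_right (norm_mul_le _ _) (norm_nonneg _)
    _ ≤ r ^ k * ‖X‖ * r ^ k := by
        refine mul_le_mul (mul_le_mul (hBk k) le_rfl (norm_nonneg _)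
          (pow_nonneg hr0 _)) (hBk k) (norm_nonneg _) ?_
        positivity
    _ = ‖X‖ * (r ^ 2) ^ k := by ring
  have hr2lt : r ^ 2 < 1 := by nlinarith
  have hr2ge : 0 ≤ r ^ 2 := by positivity
  have hsummable : ∀ X : EuclideanSpace ℝ (Fin d) →L[ℝ] EuclideanSpace ℝ (Fin d),
      Summable (fun k : ℕ => B ^ k * X * B ^ k) :=
    fun X => Summable.of_norm_bounded
      ((summable_geometric_of_lt_one hr2ge hr2lt).mul_left ‖X‖) (hsand X)
  -- Lyapunov in CLM world
  have hLyapA : T * S' + S' * T = Se' := by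
    rw [hT, hS', hSe', ← _root_.map_mul, ← _root_.map_mul, ← _root_.map_add, hLyap]
  set P := T * S' * T with hP
  -- telescoping identity
  set f : ℕ → (EuclideanSpace ℝ (Fin d) →L[ℝ] EuclideanSpace ℝ (Fin d)) :=
    fun k => B ^ k * S' * B ^ k with hf
  have hmid : S' - B * S' * B = α • Se' - α ^ 2 • P := by
    rw [hB, hP, ← hLyapA]
    exact ring_id1 α T S'
  have hg : ∀ k, f k - f (k + 1)
      = α • (B ^ k * Se' * B ^ k) - α ^ 2 • (B ^ k * P * B ^ k) := by
    intro k
    have := ring_id2 B S' (α • Se' - α ^ 2 • P) k hmid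
    rw [hf]
    simp only [this, mul_sub, sub_mul]
    rw [mul_smul_comm, smul_mul_assoc, mul_smul_comm, smul_mul_assoc]
  -- sums
  have hU := (hsummable Se').hasSum
  have hV := (hsummable P).hasSum
  set U := ∑' k : ℕ, B ^ k * Se' * B ^ k with hUdef
  set V := ∑' k : ℕ, B ^ k * P * B ^ k with hVdef
  have hgsum : HasSum (fun k => f k - f (k + 1)) (α • U - α ^ 2 • V) := by
    have h := (hU.const_smul α).sub (hV.const_smul (α ^ 2))
    have heq : (fun k => α • (B ^ k * Se' * B ^ k) - α ^ 2 • (B ^ k * P * B ^ k))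
        = fun k => f k - f (k + 1) := funext fun k => (hg k).symm
    rw [heq] at h
    exact h
  have htend1 : Filter.Tendsto (fun N => ∑ k ∈ Finset.range N, (f k - f (k + 1)))
      Filter.atTop (nhds (α • U - α ^ 2 • V)) := hgsum.tendsto_sum_nat
  have hfN : Filter.Tendsto f Filter.atTop (nhds 0) := by
    apply squeeze_zero_norm (fun N => hsand S' N)
    simpa using (tendsto_pow_atTop_nhds_zero_of_lt_one hr2ge hr2lt).const_mul ‖S'‖
  have htend2 : Filter.Tendsto (fun N => ∑ k ∈ Finset.range N, (f k - f (k + 1)))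
      Filter.atTop (nhds (S' - 0)) := by
    have heq : ∀ N, ∑ k ∈ Finset.range N, (f k - f (k + 1)) = f 0 - f N :=
      fun N => Finset.sum_range_sub' f N
    have hf0 : f 0 = S' := by rw [hf]; simp
    simp only [heq, hf0]
    exact Filter.Tendsto.const_sub _ hfN
  have hkey : α • U - α ^ 2 • V = S' := by
    have h := tendsto_nhds_unique htend1 htend2
    rw [sub_zero] at h
    exact h
  -- transfer back to matrices
  set BM : Matrix (Fin d) (Fin d) ℝ := 1 - α • Φ with hBM
  have heB : e BM = B := by
    rw [hBM, hB, _root_.map_sub, _root_.map_one, _root_.map_smul, hT]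
  have hterm1 : (fun k : ℕ => BM ^ k * Se * BM ^ k)
      = fun k : ℕ => e.symm (B ^ k * Se' * B ^ k) := by
    funext k
    rw [← heB, ← _root_.map_pow, hSe', ← _root_.map_mul, ← _root_.map_mul]
    exact (StarAlgEquiv.symm_apply_apply _ _).symm
  have hterm2 : (fun k : ℕ => BM ^ k * (Φ * S * Φ) * BM ^ k)
      = fun k : ℕ => e.symm (B ^ k * P * B ^ k) := by
    funext k
    rw [← heB, ← _root_.map_pow, hP, hT, hS', ← _root_.map_mul, ← _root_.map_mul, ← _root_.map_mul, ← _root_.map_mul]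
    exact (StarAlgEquiv.symm_apply_apply _ _).symm
  -- e.symm as a continuous linear map
  set ψlin : (EuclideanSpace ℝ (Fin d) →L[ℝ] EuclideanSpace ℝ (Fin d)) →ₗ[ℝ]
      Matrix (Fin d) (Fin d) ℝ :=
    { toFun := fun X => e.symm X
      map_add' := fun X Y => map_add _ _ _
      map_smul' := fun c X => map_smul _ _ _ } with hψlin
  have hψcont : Continuous ψlin := ψlin.continuous_of_finiteDimensional
  set ψ : (EuclideanSpace ℝ (Fin d) →L[ℝ] EuclideanSpace ℝ (Fin d)) →L[ℝ]
      Matrix (Fin d) (Fin d) ℝ := ⟨ψlin, hψcont⟩ with hψ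
  have hψapp : ∀ X, ψ X = e.symm X := fun _ => rfl
  have hsum1 : HasSum (fun k : ℕ => BM ^ k * Se * BM ^ k) (e.symm U) := by
    have h := ψ.hasSum hU
    simp only [hψapp] at h
    rw [hterm1]
    exact h
  have hsum2 : HasSum (fun k : ℕ => BM ^ k * (Φ * S * Φ) * BM ^ k) (e.symm V) := by
    have h := ψ.hasSum hV
    simp only [hψapp] at h
    rw [hterm2]
    exact h
  have ht1 : ∑' k : ℕ, BM ^ k * Se * BM ^ k = e.symm U := hsum1.tsum_eq
  have ht2 : ∑' k : ℕ, BM ^ k * (Φ * S * Φ) * BM ^ k = e.symm V := hsum2.tsum_eq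
  rw [ht1, ht2]
  have hSrev : S = e.symm S' := by rw [hS']; exact (StarAlgEquiv.symm_apply_apply _ _).symm
  rw [hSrev, ← _root_.map_smul, ← _root_.map_smul, ← _root_.map_sub, ← hkey]
  congr 1
  abel
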